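/- arXiv:2002.09314 — 2 statements merged into one kernel-verified Lean document; each statement's English description precedes it below -/
import Mathlib

section
/- Let 0 < α < 1, 0 < β < 1 with α + β < 1, and let −∞ < a < b < +∞. Let f be continuously differentiable on [a,b] and suppose the sequential Caputo derivative 𝒟^α_{a+}𝒟^β_{a+} f exists on (a,b) and extends continuously to [a,b]. If f attains its minimum over [a,b] at a point x* ∈ (a,b), then (𝒟^α_{a+}𝒟^β_{a+} f)(x*) ≤ ((α+β−1)/Γ(2−α−β)) · (x*−a)^{−α−β} · (f(a) − f(x*)) ≤ 0. -/
open Set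

/-- The Caputo fractional derivative of order `γ` with base point `a`:
`(𝒟^γ_{a+} f)(t) = (1/Γ(1−γ)) ∫_a^t (t−s)^{−γ} f′(s) ds`. -/
noncomputable def caputo (γ a : ℝ) (f : ℝ → ℝ) (t : ℝ) : ℝ :=
  (1 / Real.Gamma (1 - γ)) * ∫ s in a..t, (t - s) ^ (-γ) * deriv f s

/-- The fractional integral appearing in the sequential Caputo derivative:
`t ↦ (1/Γ(1−α)) ∫_a^t (t−s)^{−α} (𝒟^β_{a+} f)(s) ds`. -/
noncomputable def seqCaputoAux (α β a : ℝ) (f : ℝ → ℝ) (t : ℝ) : ℝ :=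
  (1 / Real.Gamma (1 - α)) * ∫ s in a..t, (t - s) ^ (-α) * caputo β a f s

/-- The sequential Caputo derivative
`(𝒟^α_{a+}𝒟^β_{a+} f)(t) = (d/dt)[(1/Γ(1−α)) ∫_a^t (t−s)^{−α} (𝒟^β_{a+} f)(s) ds]`. -/
noncomputable def seqCaputo (α β a : ℝ) (f : ℝ → ℝ) : ℝ → ℝ :=
  deriv (seqCaputoAux α β a f)


open MeasureTheory intervalIntegral Filter Topology

set_option maxHeartbeats 1600000

lemma rbeta (p q : ℝ) (hp : 0 < p) (hq : 0 < q) :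
    ∫ x in (0:ℝ)..1, x ^ (p-1) * (1-x) ^ (q-1) = Real.Gamma p * Real.Gamma q / Real.Gamma (p+q) := by
  have h := Complex.Gamma_mul_Gamma_eq_betaIntegral (s := (p:ℂ)) (t := (q:ℂ))
    (by simpa using hp) (by simpa using hq)
  have hbeta : Complex.betaIntegral (p:ℂ) (q:ℂ)
      = ((∫ x in (0:ℝ)..1, x ^ (p-1) * (1-x) ^ (q-1) : ℝ) : ℂ) := by
    rw [Complex.betaIntegral, ← intervalIntegral.integral_ofReal]
    refine intervalIntegral.integral_congr fun x hx => ?_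
    rw [uIcc_of_le (by norm_num : (0:ℝ) ≤ 1)] at hx
    have ep : ((p:ℂ) - 1) = ((p - 1 : ℝ) : ℂ) := by push_cast; ring
    have eq' : ((q:ℂ) - 1) = ((q - 1 : ℝ) : ℂ) := by push_cast; ring
    have e1x : ((1:ℂ) - (x:ℂ)) = (((1 - x : ℝ)) : ℂ) := by push_cast; ring
    rw [ep, eq', e1x, ← Complex.ofReal_cpow hx.1, ← Complex.ofReal_cpow (by linarith [hx.2] : (0:ℝ) ≤ 1 - x),
      ← Complex.ofReal_mul]
  have hne : Real.Gamma (p+q) ≠ 0 := (Real.Gamma_pos_of_pos (by linarith)).ne'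
  rw [hbeta, ← Complex.ofReal_add, Complex.Gamma_ofReal, Complex.Gamma_ofReal, Complex.Gamma_ofReal,
    ← Complex.ofReal_mul, ← Complex.ofReal_mul] at h
  have := Complex.ofReal_injective h
  field_simp
  linarith [this]

lemma II_rpow (q t : ℝ) (hq : q < 1) (c d : ℝ) :
    IntervalIntegrable (fun s => (t - s) ^ (-q)) volume c d := by
  have h := (intervalIntegrable_rpow' (a := t - c) (b := t - d) (r := -q)
    (by linarith)).comp_sub_left t
  simpa using h

lemma rpow_tail (q u t : ℝ) (hq : q < 1) :
    ∫ s in u..t, (t - s) ^ (-q) = (t - u) ^ (1 - q) / (1 - q) := by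
  have h := intervalIntegral.integral_comp_sub_left (a := u) (b := t)
    (fun x => x ^ (-q)) t
  rw [sub_self] at h
  rw [h, integral_rpow (Or.inl (by linarith)), Real.zero_rpow (by linarith : -q + 1 ≠ 0),
    show -q + 1 = 1 - q by ring]
  norm_num

lemma beta_conv (p q u t : ℝ) (hp : 0 ≤ p) (hq : 0 ≤ q) (hpq : p + q < 1) (hut : u < t) :
    ∫ s in u..t, (t - s) ^ (-p) * (s - u) ^ (-q)
      = Real.Gamma (1-p) * Real.Gamma (1-q) / Real.Gamma (2-p-q) * (t-u) ^ (1-p-q) := by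
  set c := t - u with hc
  have hc0 : 0 < c := by simp [hc]; linarith
  have h1 := intervalIntegral.integral_comp_mul_add
    (f := fun s => (t - s) ^ (-p) * (s - u) ^ (-q)) (a := (0:ℝ)) (b := 1) hc0.ne' u
  have h2 : c * 0 + u = u := by ring
  have h3 : c * 1 + u = t := by rw [hc]; ring
  rw [h2, h3, smul_eq_mul] at h1
  have h4 : ∫ x in (0:ℝ)..1, (t - (c * x + u)) ^ (-p) * ((c * x + u) - u) ^ (-q)
      = c ^ (-p) * c ^ (-q) * ∫ x in (0:ℝ)..1, x ^ ((1-q)-1) * (1-x) ^ ((1-p)-1) := by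
    rw [← intervalIntegral.integral_const_mul]
    refine intervalIntegral.integral_congr fun x hx => ?_
    rw [uIcc_of_le (by norm_num : (0:ℝ) ≤ 1)] at hx
    have e1 : t - (c * x + u) = c * (1 - x) := by rw [hc]; ring
    have e2 : (c * x + u) - u = c * x := by ring
    rw [e1, e2, Real.mul_rpow hc0.le (by linarith [hx.2]), Real.mul_rpow hc0.le hx.1]
    have : (1:ℝ)-q-1 = -q := by ring
    rw [this]
    have : (1:ℝ)-p-1 = -p := by ring
    rw [this]; ring
  rw [h4, rbeta (1-q) (1-p) (by linarith) (by linarith)] at h1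
  have h5 : (1:ℝ)-q+(1-p) = 2-p-q := by ring
  rw [h5] at h1
  have hI : (∫ s in u..t, (t - s) ^ (-p) * (s - u) ^ (-q)) = c * (c ^ (-p) * c ^ (-q) * (Real.Gamma (1-q) * Real.Gamma (1-p) / Real.Gamma (2-p-q))) := by
    rw [h1]; field_simp
  rw [hI]
  have e6 : c ^ (1-p-q) = c * (c ^ (-p) * c ^ (-q)) := by
    rw [show (1:ℝ)-p-q = 1 + (-p + -q) by ring, Real.rpow_add hc0, Real.rpow_add hc0, Real.rpow_one]
  calc c * (c ^ (-p) * c ^ (-q) * (Real.Gamma (1-q) * Real.Gamma (1-p) / Real.Gamma (2-p-q)))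
      = (c * (c ^ (-p) * c ^ (-q))) * (Real.Gamma (1-q) * Real.Gamma (1-p) / Real.Gamma (2-p-q)) := by ring
    _ = Real.Gamma (1-p) * Real.Gamma (1-q) / Real.Gamma (2-p-q) * c ^ (1-p-q) := by rw [e6]; ring

lemma fubini_tri (p q a t : ℝ) (g : ℝ → ℝ) (M : ℝ) (hp : 0 ≤ p) (hp1 : p < 1) (hq : 0 ≤ q) (hq1 : q < 1)
    (hat : a < t) (hgm : Measurable g) (hM : ∀ u ∈ Set.Ioc a t, |g u| ≤ M) :
    (∫ s in a..t, (t - s) ^ (-p) * ∫ u in a..s, (s - u) ^ (-q) * g u)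
      = ∫ u in a..t, (∫ s in u..t, (t - s) ^ (-p) * (s - u) ^ (-q)) * g u := by
  set F : ℝ → ℝ → ℝ := fun s u =>
    (Set.Ioc a s).indicator (fun v => (t - s) ^ (-p) * ((s - v) ^ (-q) * g v)) u with hF
  have hM0 : 0 ≤ M := le_trans (abs_nonneg _) (hM t ⟨hat, le_refl _⟩)
  -- measurability of the uncurried function
  have hmeas : Measurable (Function.uncurry F) := by
    have hS : MeasurableSet {z : ℝ × ℝ | a < z.2 ∧ z.2 ≤ z.1} :=
      (measurableSet_lt measurable_const measurable_snd).inter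
        (measurableSet_le measurable_snd measurable_fst)
    have hG : Measurable (fun z : ℝ × ℝ => (t - z.1) ^ (-p) * ((z.1 - z.2) ^ (-q) * g z.2)) := by
      refine Measurable.mul ?_ (Measurable.mul ?_ (hgm.comp measurable_snd))
      · exact (measurable_const.sub measurable_fst).pow measurable_const
      · exact (measurable_fst.sub measurable_snd).pow measurable_const
    have heq : Function.uncurry F = {z : ℝ × ℝ | a < z.2 ∧ z.2 ≤ z.1}.indicator
        (fun z : ℝ × ℝ => (t - z.1) ^ (-p) * ((z.1 - z.2) ^ (-q) * g z.2)) := by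
      funext z
      rcases z with ⟨s, u⟩
      simp only [Function.uncurry, hF, Set.indicator_apply, Set.mem_Ioc, Set.mem_setOf_eq]
    rw [heq]
    exact hG.indicator hS
  -- basic integrability on Ioc a s
  have hIs0 : ∀ s ∈ Set.Ioc a t,
      IntegrableOn (fun v => (t - s) ^ (-p) * ((s - v) ^ (-q) * g v)) (Set.Ioc a s) volume := by
    intro s hs
    have h1 : IntegrableOn (fun v => (s - v) ^ (-q)) (Set.Ioc a s) volume := by
      have := II_rpow q s hq1 a s
      rwa [intervalIntegrable_iff_integrableOn_Ioc_of_le hs.1.le] at this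
    have hsub : Set.Ioc a s ⊆ Set.Ioc a t := Set.Ioc_subset_Ioc_right hs.2
    have h2 : Integrable (fun v => g v * (s - v) ^ (-q)) (volume.restrict (Set.Ioc a s)) := by
      refine Integrable.bdd_mul (c := M) h1 (hgm.aestronglyMeasurable) ?_
      refine (ae_restrict_iff' measurableSet_Ioc).2 (Filter.Eventually.of_forall ?_)
      intro v hv
      exact (Real.norm_eq_abs _ ▸ hM v (hsub hv))
    have h3 : Integrable (fun v => (s - v) ^ (-q) * g v) (volume.restrict (Set.Ioc a s)) := by
      simpa [mul_comm] using h2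
    exact h3.const_mul _
  have hIs : ∀ s ∈ Set.Ioc a t, Integrable (F s) (volume.restrict (Set.Ioc a t)) := by
    intro s hs
    rw [hF]
    simp only
    rw [integrable_indicator_iff measurableSet_Ioc]
    have hsub : Set.Ioc a s ⊆ Set.Ioc a t := Set.Ioc_subset_Ioc_right hs.2
    rw [IntegrableOn, Measure.restrict_restrict measurableSet_Ioc,
      Set.inter_eq_self_of_subset_left hsub]
    exact hIs0 s hs
  -- the full integrability on the product
  have hInt : Integrable (Function.uncurry F)
      ((volume.restrict (Set.Ioc a t)).prod (volume.restrict (Set.Ioc a t))) := by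
    rw [integrable_prod_iff hmeas.aestronglyMeasurable]
    refine ⟨(ae_restrict_iff' measurableSet_Ioc).2 (Filter.Eventually.of_forall hIs), ?_⟩
    set C0 : ℝ := M * ((t - a) ^ (1 - q) / (1 - q)) with hC0
    have hC00 : 0 ≤ C0 :=
      mul_nonneg hM0 (div_nonneg (Real.rpow_nonneg (by linarith) _) (by linarith))
    have hdom : Integrable (fun s => C0 * (t - s) ^ (-p)) (volume.restrict (Set.Ioc a t)) := by
      have := (II_rpow p t hp1 a t).const_mul C0
      rwa [intervalIntegrable_iff_integrableOn_Ioc_of_le hat.le] at this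
    refine Integrable.mono' hdom hmeas.aestronglyMeasurable.norm.integral_prod_right' ?_
    refine (ae_restrict_iff' measurableSet_Ioc).2 (Filter.Eventually.of_forall ?_)
    intro s hs
    have hts : 0 ≤ t - s := by linarith [hs.2]
    have hsub : Set.Ioc a s ⊆ Set.Ioc a t := Set.Ioc_subset_Ioc_right hs.2
    have hnormeq : (fun u => ‖F s u‖)
        = (Set.Ioc a s).indicator (fun v => ‖(t - s) ^ (-p) * ((s - v) ^ (-q) * g v)‖) := by
      funext u
      rw [hF]
      simp only [Set.indicator_apply]
      split <;> simp
    have key : (∫ u, ‖F s u‖ ∂(volume.restrict (Set.Ioc a t))) ≤ C0 * (t - s) ^ (-p) := by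
      rw [hnormeq, MeasureTheory.integral_indicator measurableSet_Ioc,
        Measure.restrict_restrict measurableSet_Ioc, Set.inter_eq_self_of_subset_left hsub]
      have step1 : (∫ u in Set.Ioc a s, ‖(t - s) ^ (-p) * ((s - u) ^ (-q) * g u)‖)
          ≤ ∫ u in Set.Ioc a s, (t - s) ^ (-p) * ((s - u) ^ (-q) * M) := by
        refine setIntegral_mono_on (hIs0 s hs).norm ?_ measurableSet_Ioc ?_
        · have h1 : IntegrableOn (fun v => (s - v) ^ (-q)) (Set.Ioc a s) volume := by
            have := II_rpow q s hq1 a s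
            rwa [intervalIntegrable_iff_integrableOn_Ioc_of_le hs.1.le] at this
          exact (h1.mul_const M).const_mul ((t - s) ^ (-p))
        · intro u hu
          have hsu : 0 ≤ s - u := by linarith [hu.2]
          rw [norm_mul, norm_mul, Real.norm_eq_abs, Real.norm_eq_abs, Real.norm_eq_abs,
            abs_of_nonneg (Real.rpow_nonneg hts _), abs_of_nonneg (Real.rpow_nonneg hsu _)]
          have := hM u (hsub hu)
          have h2 : 0 ≤ (s - u) ^ (-q) := Real.rpow_nonneg hsu _
          have h5 : 0 ≤ (t - s) ^ (-p) := Real.rpow_nonneg hts _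
          exact mul_le_mul_of_nonneg_left (mul_le_mul_of_nonneg_left this h2) h5
      have step2 : (∫ u in Set.Ioc a s, (t - s) ^ (-p) * ((s - u) ^ (-q) * M))
          = (t - s) ^ (-p) * (M * ((s - a) ^ (1 - q) / (1 - q))) := by
        rw [MeasureTheory.integral_const_mul]
        congr 1
        rw [show (fun u => (s - u) ^ (-q) * M) = fun u => ((s - u) ^ (-q)) * M from rfl]
        rw [MeasureTheory.integral_mul_const]
        rw [← intervalIntegral.integral_of_le hs.1.le, rpow_tail q a s hq1]
        ring
      have step3 : (t - s) ^ (-p) * (M * ((s - a) ^ (1 - q) / (1 - q))) ≤ C0 * (t - s) ^ (-p) := by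
        rw [hC0]
        have h4 : (s - a) ^ (1 - q) ≤ (t - a) ^ (1 - q) :=
          Real.rpow_le_rpow (by linarith [hs.1]) (by linarith [hs.2]) (by linarith)
        have h5 : 0 ≤ (t - s) ^ (-p) := Real.rpow_nonneg hts _
        have hq2 : (0:ℝ) < 1 - q := by linarith
        have h6 : M * ((s - a) ^ (1 - q) / (1 - q)) ≤ M * ((t - a) ^ (1 - q) / (1 - q)) := by
          gcongr
        nlinarith
      linarith
    rw [Real.norm_eq_abs, abs_of_nonneg (integral_nonneg fun u => norm_nonneg _)]
    exact key
  have hswap := MeasureTheory.integral_integral_swap hInt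
  have hL : (∫ s in a..t, (t - s) ^ (-p) * ∫ u in a..s, (s - u) ^ (-q) * g u)
      = ∫ s, (∫ u, F s u ∂(volume.restrict (Set.Ioc a t))) ∂(volume.restrict (Set.Ioc a t)) := by
    rw [intervalIntegral.integral_of_le hat.le]
    refine (setIntegral_congr_fun measurableSet_Ioc fun s hs => ?_)
    have hsub : Set.Ioc a s ⊆ Set.Ioc a t := Set.Ioc_subset_Ioc_right hs.2
    have : (∫ u, F s u ∂(volume.restrict (Set.Ioc a t)))
        = (t - s) ^ (-p) * ∫ u in a..s, (s - u) ^ (-q) * g u := by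
      rw [hF]
      simp only
      rw [MeasureTheory.integral_indicator measurableSet_Ioc,
        Measure.restrict_restrict measurableSet_Ioc, Set.inter_eq_self_of_subset_left hsub,
        MeasureTheory.integral_const_mul, intervalIntegral.integral_of_le hs.1.le]
    rw [this]
  have hR : (∫ u in a..t, (∫ s in u..t, (t - s) ^ (-p) * (s - u) ^ (-q)) * g u)
      = ∫ u, (∫ s, F s u ∂(volume.restrict (Set.Ioc a t))) ∂(volume.restrict (Set.Ioc a t)) := by
    rw [intervalIntegral.integral_of_le hat.le]
    refine (setIntegral_congr_fun measurableSet_Ioc fun u hu => ?_)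
    have h1 : ∀ s ∈ Set.Ioc a t, F s u = (Set.Icc u t).indicator
        (fun s => (t - s) ^ (-p) * ((s - u) ^ (-q) * g u)) s := by
      intro s hs
      rw [hF]
      simp only [Set.indicator_apply, Set.mem_Ioc, Set.mem_Icc]
      by_cases hus : u ≤ s
      · rw [if_pos ⟨hu.1, hus⟩, if_pos ⟨hus, hs.2⟩]
      · rw [if_neg (fun h => hus h.2), if_neg (fun h => hus h.1)]
    have h2 : (∫ s, F s u ∂(volume.restrict (Set.Ioc a t)))
        = (∫ s in u..t, (t - s) ^ (-p) * (s - u) ^ (-q)) * g u := by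
      calc (∫ s, F s u ∂(volume.restrict (Set.Ioc a t)))
          = ∫ s in Set.Ioc a t, (Set.Icc u t).indicator
              (fun s => (t - s) ^ (-p) * ((s - u) ^ (-q) * g u)) s :=
            setIntegral_congr_fun measurableSet_Ioc h1
        _ = ∫ s in Set.Icc u t ∩ Set.Ioc a t, (t - s) ^ (-p) * ((s - u) ^ (-q) * g u) := by
            rw [MeasureTheory.integral_indicator measurableSet_Icc,
              Measure.restrict_restrict measurableSet_Icc]
        _ = ∫ s in Set.Ioc u t, (t - s) ^ (-p) * ((s - u) ^ (-q) * g u) := by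
            have hsub2 : Set.Icc u t ⊆ Set.Ioc a t := fun s hs => ⟨lt_of_lt_of_le hu.1 hs.1, hs.2⟩
            rw [Set.inter_eq_self_of_subset_left hsub2,
              MeasureTheory.integral_Icc_eq_integral_Ioc]
        _ = (∫ s in u..t, (t - s) ^ (-p) * (s - u) ^ (-q)) * g u := by
            rw [← intervalIntegral.integral_of_le hu.2, ← intervalIntegral.integral_mul_const]
            simp only [mul_assoc]
    rw [h2]
  rw [hL, hswap, ← hR]

lemma formulaA (α β a b : ℝ) (f : ℝ → ℝ)
    (hα0 : 0 < α) (hβ0 : 0 < β) (hsum : α + β < 1) (hab : a < b)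
    (hf : ∀ x ∈ Set.Icc a b, HasDerivAt f (deriv f x) x)
    (hf' : ContinuousOn (deriv f) (Set.Icc a b))
    (t : ℝ) (ht : t ∈ Set.Ioc a b) :
    seqCaputoAux α β a f t
      = (1 - (α+β)) / Real.Gamma (2 - (α+β))
          * ∫ s in a..t, (t - s) ^ (-(α+β)) * (f s - f a) := by
  obtain ⟨M, hM⟩ := (isCompact_Icc (a := a) (b := b)).exists_bound_of_continuousOn hf'
  have hMt : ∀ u ∈ Set.Ioc a t, |deriv f u| ≤ M := fun u hu =>
    (Real.norm_eq_abs _) ▸ hM u ⟨hu.1.le, hu.2.trans ht.2⟩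
  have hgm : Measurable (deriv f) := measurable_deriv f
  have hat : a < t := ht.1
  have hγ1 : α + β < 1 := hsum
  have hΓα : Real.Gamma (1 - α) ≠ 0 := (Real.Gamma_pos_of_pos (by linarith)).ne'
  have hΓβ : Real.Gamma (1 - β) ≠ 0 := (Real.Gamma_pos_of_pos (by linarith)).ne'
  have hΓγ : Real.Gamma (2 - (α+β)) ≠ 0 := (Real.Gamma_pos_of_pos (by linarith)).ne'
  -- step 1: unfold and pull out the constant
  have step1 : seqCaputoAux α β a f t
      = (1 / Real.Gamma (1 - α)) * ((1 / Real.Gamma (1 - β))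
          * ∫ s in a..t, (t - s) ^ (-α) * ∫ u in a..s, (s - u) ^ (-β) * deriv f u) := by
    rw [seqCaputoAux]
    congr 1
    have e1 : ∀ s, (t - s) ^ (-α) * caputo β a f s
        = (1 / Real.Gamma (1 - β))
            * ((t - s) ^ (-α) * ∫ u in a..s, (s - u) ^ (-β) * deriv f u) := by
      intro s; rw [caputo]; ring
    simp only [e1]
    rw [intervalIntegral.integral_const_mul]
  -- step 2+3: fubini and beta kernel
  have step2 : (∫ s in a..t, (t - s) ^ (-α) * ∫ u in a..s, (s - u) ^ (-β) * deriv f u)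
      = (Real.Gamma (1-α) * Real.Gamma (1-β) / Real.Gamma (2-α-β))
          * ∫ u in a..t, (t - u) ^ (1-α-β) * deriv f u := by
    rw [fubini_tri α β a t (deriv f) M hα0.le (by linarith) hβ0.le (by linarith) hat hgm hMt]
    rw [← intervalIntegral.integral_const_mul]
    refine intervalIntegral.integral_congr fun u hu => ?_
    rw [uIcc_of_le hat.le] at hu
    rcases eq_or_lt_of_le hu.2 with h | h
    · rw [h]
      simp [Real.zero_rpow (by linarith : (1:ℝ)-α-β ≠ 0)]
    · rw [beta_conv α β u t hα0.le hβ0.le hsum h]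
      ring
  -- step 4: expand the kernel as an integral
  have step4 : (∫ u in a..t, (t - u) ^ (1-α-β) * deriv f u)
      = (1 - (α+β)) * ∫ u in a..t,
          (∫ s in u..t, (t - s) ^ (-(α+β)) * (s - u) ^ (-(0:ℝ))) * deriv f u := by
    rw [← intervalIntegral.integral_const_mul]
    refine intervalIntegral.integral_congr fun u hu => ?_
    have e : (∫ s in u..t, (t - s) ^ (-(α+β)) * (s - u) ^ (-(0:ℝ)))
        = (t - u) ^ (1 - (α+β)) / (1 - (α+β)) := by
      simp only [neg_zero, Real.rpow_zero, mul_one]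
      exact rpow_tail (α+β) u t hγ1
    rw [e]
    have : (1:ℝ) - α - β = 1 - (α+β) := by ring
    rw [this]
    have hne : (1:ℝ) - (α+β) ≠ 0 := by linarith
    field_simp
  -- step 5: fubini back and FTC
  have step5 : (∫ u in a..t,
        (∫ s in u..t, (t - s) ^ (-(α+β)) * (s - u) ^ (-(0:ℝ))) * deriv f u)
      = ∫ s in a..t, (t - s) ^ (-(α+β)) * (f s - f a) := by
    rw [← fubini_tri (α+β) 0 a t (deriv f) M (by linarith) hγ1 le_rfl one_pos hat hgm hMt]
    refine intervalIntegral.integral_congr fun s hs => ?_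
    rw [uIcc_of_le hat.le] at hs
    congr 1
    have e2 : (∫ u in a..s, (s - u) ^ (-(0:ℝ)) * deriv f u) = ∫ u in a..s, deriv f u := by
      refine intervalIntegral.integral_congr fun u _ => ?_
      simp
    rw [e2]
    refine intervalIntegral.integral_eq_sub_of_hasDerivAt (fun x hx => ?_) ?_
    · rw [uIcc_of_le hs.1] at hx
      exact hf x ⟨hx.1, hx.2.trans (hs.2.trans ht.2)⟩
    · apply ContinuousOn.intervalIntegrable
      apply hf'.mono
      rw [uIcc_of_le hs.1]
      exact Set.Icc_subset_Icc le_rfl (hs.2.trans ht.2)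
  rw [step1, step2, step4, step5]
  have e3 : (2:ℝ) - α - β = 2 - (α+β) := by ring
  rw [e3]
  field_simp

/-- extremum estimate for the sequential Caputo derivative at an
interior minimum point, in the case `α + β < 1`. -/
theorem seqCaputo_min_estimate_of_lt_one
    (α β a b : ℝ) (f : ℝ → ℝ) (xs : ℝ)
    (hα0 : 0 < α) (hα1 : α < 1) (hβ0 : 0 < β) (hβ1 : β < 1)
    (hsum : α + β < 1) (hab : a < b)
    (hf : ∀ x ∈ Set.Icc a b, HasDerivAt f (deriv f x) x)
    (hf' : ContinuousOn (deriv f) (Set.Icc a b))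
    (hex : ∀ x ∈ Set.Ioo a b,
      HasDerivAt (seqCaputoAux α β a f) (seqCaputo α β a f x) x)
    (hcont : ∃ g : ℝ → ℝ, ContinuousOn g (Set.Icc a b) ∧
      ∀ x ∈ Set.Ioo a b, g x = seqCaputo α β a f x)
    (hxs : xs ∈ Set.Ioo a b)
    (hmin : ∀ x ∈ Set.Icc a b, f xs ≤ f x) :
    seqCaputo α β a f xs
        ≤ (α + β - 1) / Real.Gamma (2 - α - β) * (xs - a) ^ (-(α + β)) * (f a - f xs) ∧
      (α + β - 1) / Real.Gamma (2 - α - β) * (xs - a) ^ (-(α + β)) * (f a - f xs) ≤ 0 := by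
  have e23 : (2:ℝ) - α - β = 2 - (α+β) := by ring
  rw [e23]
  set γ : ℝ := α + β with hγ
  have hγ0 : 0 < γ := by positivity
  have hγ1 : γ < 1 := hsum
  have hc2 : 0 < Real.Gamma (2 - γ) := Real.Gamma_pos_of_pos (by linarith)
  have hxsa : a < xs := hxs.1
  have hxsb : xs < b := hxs.2
  have hK : 0 ≤ f a - f xs := by linarith [hmin a ⟨le_refl a, hab.le⟩]
  set K : ℝ := f a - f xs with hKdef
  set T : ℝ := (γ - 1) / Real.Gamma (2 - γ) * (xs - a) ^ (-γ) * K with hT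
  have hT0 : T ≤ 0 := by
    rw [hT]
    apply mul_nonpos_of_nonpos_of_nonneg _ hK
    apply mul_nonpos_of_nonpos_of_nonneg _ (Real.rpow_nonneg (by linarith) _)
    apply div_nonpos_of_nonpos_of_nonneg (by linarith) hc2.le
  refine ⟨?_, hT0⟩
  -- the hard part
  set w : ℝ := (1 - γ) / Real.Gamma (2 - γ) with hw
  have hw0 : 0 < w := div_pos (by linarith) hc2
  have hfc : ContinuousOn f (Set.Icc a b) := fun x hx =>
    (hf x hx).continuousAt.continuousWithinAt
  -- interval integrability of the kernels
  have hIIker : ∀ t c d : ℝ, c ∈ Set.Icc a b → d ∈ Set.Icc a b →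
      IntervalIntegrable (fun s => (t - s) ^ (-γ) * (f s - f xs)) volume c d := by
    intro t c d hc hd
    refine (II_rpow γ t hγ1 c d).mul_continuousOn ?_
    exact (hfc.sub continuousOn_const).mono (Set.uIcc_subset_Icc hc hd)
  set G : ℝ → ℝ := fun t => ∫ s in a..t, (t - s) ^ (-γ) * (f s - f xs) with hG
  have hident : ∀ t ∈ Set.Ioc a b, seqCaputoAux α β a f t
      = w * G t - (K / Real.Gamma (2 - γ)) * (t - a) ^ (1 - γ) := by
    intro t htab
    rw [formulaA α β a b f hα0 hβ0 hsum hab hf hf' t htab]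
    have hsplit : (∫ s in a..t, (t - s) ^ (-γ) * (f s - f a))
        = G t - K * ((t - a) ^ (1-γ) / (1-γ)) := by
      have h1 : ∀ s, (t - s) ^ (-γ) * (f s - f a)
          = (t - s) ^ (-γ) * (f s - f xs) - (t - s) ^ (-γ) * K := by
        intro s; rw [hKdef]; ring
      rw [hG]
      simp only [h1]
      rw [intervalIntegral.integral_sub (hIIker t a t ⟨le_refl a, hab.le⟩ ⟨htab.1.le, htab.2⟩)
        ((II_rpow γ t hγ1 a t).mul_const K), intervalIntegral.integral_mul_const,
        rpow_tail γ a t hγ1]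
      ring
    rw [← hγ, hsplit, hw]
    have hne : (1:ℝ) - γ ≠ 0 := by linarith
    field_simp
  have hd : HasDerivAt (seqCaputoAux α β a f) (seqCaputo α β a f xs) xs := hex xs hxs
  set ψ : ℝ → ℝ := fun t => - (K / Real.Gamma (2 - γ)) * (t - a) ^ (1 - γ) with hψdef
  have hψT : HasDerivAt ψ T xs := by
    have h0 : HasDerivAt (fun t : ℝ => t - a) 1 xs := (hasDerivAt_id xs).sub_const a
    have h1 : HasDerivAt (fun y : ℝ => y ^ (1-γ)) ((1-γ) * (xs - a) ^ (1-γ-1)) (xs - a) :=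
      Real.hasDerivAt_rpow_const (Or.inl (by linarith : xs - a ≠ 0))
    have h3 := (h1.comp xs h0).const_mul (-(K / Real.Gamma (2 - γ)))
    convert h3 using 1
    · rfl
    · rfl
    · rfl
    rw [hT, show (1 - γ - 1 : ℝ) = -γ by ring]
    have hne : Real.Gamma (2 - γ) ≠ 0 := hc2.ne'
    field_simp
    ring
  have hmono : 𝓝[Set.Ioi xs] xs ≤ 𝓝[{xs}ᶜ] xs :=
    nhdsWithin_mono xs fun y hy => ne_of_gt hy
  have hslopeF : Tendsto (slope (seqCaputoAux α β a f) xs) (𝓝[>] xs)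
      (𝓝 (seqCaputo α β a f xs)) :=
    (hasDerivAt_iff_tendsto_slope.1 hd).mono_left hmono
  have hslopeψ : Tendsto (slope ψ xs) (𝓝[>] xs) (𝓝 T) :=
    (hasDerivAt_iff_tendsto_slope.1 hψT).mono_left hmono
  have hdiff : Tendsto (fun t => slope (seqCaputoAux α β a f) xs t - slope ψ xs t) (𝓝[>] xs)
      (𝓝 (seqCaputo α β a f xs - T)) := hslopeF.sub hslopeψ
  have heq : ∀ᶠ t in 𝓝[>] xs, slope (seqCaputoAux α β a f) xs t - slope ψ xs t
      = w * slope G xs t := by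
    have hmem : Set.Ioo xs b ∈ 𝓝[>] xs :=
      Ioo_mem_nhdsGT hxsb
    filter_upwards [hmem] with t ht
    have h1 := hident t ⟨lt_trans hxsa ht.1, ht.2.le⟩
    have h2 := hident xs ⟨hxsa, hxsb.le⟩
    rw [slope_def_field, slope_def_field, slope_def_field, h1, h2, hψdef]
    have hne : t - xs ≠ 0 := ne_of_gt (sub_pos.2 ht.1)
    field_simp
    ring
  have hlim : Tendsto (fun t => w * slope G xs t) (𝓝[>] xs)
      (𝓝 (seqCaputo α β a f xs - T)) := hdiff.congr' (heq.mono fun t h => h)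
  have hderiv0 : deriv f xs = 0 := by
    have hloc : IsLocalMin f xs :=
      Filter.eventually_of_mem (Icc_mem_nhds hxsa hxsb) (fun x hx => hmin x hx)
    exact hloc.deriv_eq_zero
  have hslope0 : Tendsto (fun s => (f s - f xs) / (s - xs)) (𝓝[>] xs) (𝓝 0) := by
    have h := hasDerivAt_iff_tendsto_slope.1 (hf xs ⟨hxsa.le, hxsb.le⟩)
    rw [hderiv0] at h
    refine Tendsto.congr ?_ (h.mono_left hmono)
    intro s; rw [slope_def_field]
  have key : seqCaputo α β a f xs - T ≤ 0 := by
    set C : ℝ := w * (b - a) ^ (1-γ) / (1-γ) with hC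
    have hC0 : 0 ≤ C :=
      div_nonneg (mul_nonneg hw0.le (Real.rpow_nonneg (by linarith) _)) (by linarith)
    refine le_of_forall_pos_le_add ?_
    intro ε hε
    set ε1 : ℝ := ε / (C + 1) with hε1
    have hε10 : 0 < ε1 := by rw [hε1]; positivity
    have hev1 : ∀ᶠ s in 𝓝[>] xs, (f s - f xs) / (s - xs) < ε1 :=
      hslope0.eventually_lt_const hε10
    rw [Filter.eventually_iff, Metric.mem_nhdsWithin_iff] at hev1
    obtain ⟨δ, hδ0, hδ⟩ := hev1
    have hbound : ∀ᶠ t in 𝓝[>] xs, w * slope G xs t ≤ ε := by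
      have hmem : Set.Ioo xs (min b (xs + δ)) ∈ 𝓝[>] xs :=
        Ioo_mem_nhdsGT (lt_min hxsb (by linarith))
      filter_upwards [hmem] with t ht
      obtain ⟨ht1, ht2⟩ := ht
      have htb : t < b := lt_of_lt_of_le ht2 (min_le_left _ _)
      have htδ : t < xs + δ := lt_of_lt_of_le ht2 (min_le_right _ _)
      have htxs : 0 < t - xs := sub_pos.2 ht1
      have hφ : ∀ s ∈ Set.Ioc xs t, f s - f xs ≤ ε1 * (t - xs) := by
        intro s hs
        have hsx : 0 < s - xs := sub_pos.2 hs.1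
        have hslt : (f s - f xs) / (s - xs) < ε1 := by
          apply hδ
          refine ⟨?_, hs.1⟩
          rw [Metric.mem_ball, Real.dist_eq, abs_of_pos hsx]
          linarith [hs.2]
        have h9 := (div_lt_iff₀ hsx).1 hslt
        nlinarith [hs.2]
      have hIax_t : IntervalIntegrable (fun s => (t - s) ^ (-γ) * (f s - f xs)) volume a xs :=
        hIIker t a xs ⟨le_refl a, hab.le⟩ ⟨hxsa.le, hxsb.le⟩
      have hIxt : IntervalIntegrable (fun s => (t - s) ^ (-γ) * (f s - f xs)) volume xs t :=
        hIIker t xs t ⟨hxsa.le, hxsb.le⟩ ⟨(lt_trans hxsa ht1).le, htb.le⟩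
      have hIax_xs : IntervalIntegrable (fun s => (xs - s) ^ (-γ) * (f s - f xs)) volume a xs :=
        hIIker xs a xs ⟨le_refl a, hab.le⟩ ⟨hxsa.le, hxsb.le⟩
      have hsplitG : G t = (∫ s in a..xs, (t - s) ^ (-γ) * (f s - f xs))
          + ∫ s in xs..t, (t - s) ^ (-γ) * (f s - f xs) := by
        rw [hG]
        exact (intervalIntegral.integral_add_adjacent_intervals hIax_t hIxt).symm
      have hA : (∫ s in a..xs, (t - s) ^ (-γ) * (f s - f xs))
          - (∫ s in a..xs, (xs - s) ^ (-γ) * (f s - f xs)) ≤ 0 := by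
        rw [← intervalIntegral.integral_sub hIax_t hIax_xs,
          intervalIntegral.integral_of_le hxsa.le, MeasureTheory.integral_Ioc_eq_integral_Ioo]
        apply MeasureTheory.setIntegral_nonpos measurableSet_Ioo
        intro s hs
        have h1 : (t - s) ^ (-γ) ≤ (xs - s) ^ (-γ) :=
          Real.rpow_le_rpow_of_nonpos (by linarith [hs.2]) (by linarith [ht1.le]) (by linarith)
        have h2 : 0 ≤ f s - f xs := by
          have := hmin s ⟨hs.1.le, by linarith [hs.2]⟩
          linarith
        nlinarith
      have hB : (∫ s in xs..t, (t - s) ^ (-γ) * (f s - f xs))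
          ≤ ε1 * (t - xs) * ((t - xs) ^ (1-γ) / (1-γ)) := by
        have hrhsI : IntervalIntegrable (fun s => (t - s) ^ (-γ) * (ε1 * (t - xs))) volume xs t :=
          (II_rpow γ t hγ1 xs t).mul_const _
        have hmono2 : ∀ s ∈ Set.Icc xs t, (t - s) ^ (-γ) * (f s - f xs)
            ≤ (t - s) ^ (-γ) * (ε1 * (t - xs)) := by
          intro s hs
          have hts0 : 0 ≤ t - s := by linarith [hs.2]
          have hfs : f s - f xs ≤ ε1 * (t - xs) := by
            rcases eq_or_lt_of_le hs.1 with h | h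
            · rw [← h]; simp; positivity
            · exact hφ s ⟨h, hs.2⟩
          exact mul_le_mul_of_nonneg_left hfs (Real.rpow_nonneg hts0 _)
        calc (∫ s in xs..t, (t - s) ^ (-γ) * (f s - f xs))
            ≤ ∫ s in xs..t, (t - s) ^ (-γ) * (ε1 * (t - xs)) :=
              intervalIntegral.integral_mono_on ht1.le hIxt hrhsI hmono2
          _ = (∫ s in xs..t, (t - s) ^ (-γ)) * (ε1 * (t - xs)) := by
              rw [← intervalIntegral.integral_mul_const]
          _ = ε1 * (t - xs) * ((t - xs) ^ (1-γ) / (1-γ)) := by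
              rw [rpow_tail γ xs t hγ1]; ring
      have hGxs : G xs = ∫ s in a..xs, (xs - s) ^ (-γ) * (f s - f xs) := by rw [hG]
      have hGdiff : G t - G xs ≤ ε1 * (t - xs) * ((t - xs) ^ (1-γ) / (1-γ)) := by
        rw [hsplitG, hGxs]; linarith
      have hslopeGb : slope G xs t ≤ ε1 * ((t - xs) ^ (1-γ) / (1-γ)) := by
        rw [slope_def_field, div_le_iff₀ htxs]
        nlinarith [hGdiff]
      have h6 : (t - xs) ^ (1-γ) ≤ (b - a) ^ (1-γ) :=
        Real.rpow_le_rpow (by linarith) (by linarith) (by linarith)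
      have h7 : w * (ε1 * ((t - xs) ^ (1-γ) / (1-γ))) ≤ ε1 * C := by
        rw [hC]
        have hpos : (0:ℝ) < 1 - γ := by linarith
        have h60 := mul_le_mul_of_nonneg_left h6 (mul_nonneg hε10.le hw0.le)
        calc w * (ε1 * ((t - xs) ^ (1-γ) / (1-γ)))
            = (ε1 * w * (t - xs) ^ (1-γ)) * (1/(1-γ)) := by ring
          _ ≤ (ε1 * w * (b - a) ^ (1-γ)) * (1/(1-γ)) := by
              apply mul_le_mul_of_nonneg_right _ (one_div_pos.2 hpos).le
              linarith [h60]
          _ = ε1 * (w * (b - a) ^ (1-γ) / (1-γ)) := by ring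
      have h8 : ε1 * C ≤ ε := by
        have h81 : ε1 * (C + 1) = ε := by
          rw [hε1]; field_simp
        nlinarith [hε10.le]
      calc w * slope G xs t ≤ w * (ε1 * ((t - xs) ^ (1-γ) / (1-γ))) :=
            mul_le_mul_of_nonneg_left hslopeGb hw0.le
        _ ≤ ε1 * C := h7
        _ ≤ ε := h8
    have hfin := le_of_tendsto hlim hbound
    linarith
  linarith [key]
end

section
/- Let 0 < α < 1, 0 < β < 1 with α + β = 1, and let −∞ < a < b < +∞. Let f be continuously differentiable on [a,b] and suppose the sequential Caputo derivative 𝒟^α_{a+}𝒟^β_{a+} f exists on (a,b) and extends continuously to [a,b]. If f attains its minimum over [a,b] at a point x* ∈ (a,b), then (𝒟^α_{a+}𝒟^β_{a+} f)(x*) = 0. -/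
open Set

section AuxLemmas
open MeasureTheory intervalIntegral

lemma measurable_rpow_const' (r : ℝ) : Measurable fun x : ℝ => x ^ r := by
  have : (fun x : ℝ => x ^ r) = fun x =>
      if x < 0 then Real.exp (Real.log x * r) * Real.cos (r * Real.pi)
      else if x = 0 then (if r = 0 then 1 else 0) else Real.exp (Real.log x * r) := by
    funext x
    rcases lt_trichotomy x 0 with h | h | h
    · rw [if_pos h, Real.rpow_def_of_neg h]
    · subst h
      rw [if_neg (lt_irrefl _), if_pos rfl]
      by_cases hr : r = 0
      · simp [hr]
      · simp [hr, Real.zero_rpow hr]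
    · rw [if_neg (not_lt.mpr h.le), if_neg h.ne', Real.rpow_def_of_pos h]
  rw [this]
  apply Measurable.ite (measurableSet_lt measurable_id measurable_const)
  · exact ((Real.measurable_log.mul measurable_const).exp).mul measurable_const
  · exact Measurable.ite (measurableSet_eq_fun measurable_id measurable_const) measurable_const
      ((Real.measurable_log.mul measurable_const).exp)

lemma beta_real' (α β : ℝ) (hα0 : 0 < α) (hβ0 : 0 < β) (hsum : α + β = 1) :
    ∫ x in (0:ℝ)..1, (1 - x) ^ (-α) * x ^ (-β) = Real.Gamma α * Real.Gamma β := by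
  have h := Complex.Gamma_mul_Gamma_eq_betaIntegral (s := (α:ℂ)) (t := (β:ℂ))
    (by simpa using hα0) (by simpa using hβ0)
  have hab : (α:ℂ) + (β:ℂ) = 1 := by norm_cast
  rw [hab, Complex.Gamma_one, one_mul] at h
  have hioc : Complex.betaIntegral (α:ℂ) (β:ℂ)
      = ∫ x in (0:ℝ)..1, (((1 - x) ^ (-α) * x ^ (-β) : ℝ) : ℂ) := by
    rw [Complex.betaIntegral]
    apply intervalIntegral.integral_congr
    intro x hx
    rw [uIcc_of_le (by norm_num)] at hx
    have hx0 : (0:ℝ) ≤ x := hx.1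
    have hx1 : (0:ℝ) ≤ 1 - x := by linarith [hx.2]
    have e1 : (x:ℂ) ^ ((α:ℂ) - 1) = ((x ^ (α - 1) : ℝ) : ℂ) := by
      rw [show ((α:ℂ) - 1) = ((α - 1 : ℝ) : ℂ) by push_cast; ring,
        Complex.ofReal_cpow hx0]
    have e2 : ((1:ℂ) - x) ^ ((β:ℂ) - 1) = (((1 - x) ^ (β - 1) : ℝ) : ℂ) := by
      rw [show ((1:ℂ) - x) = (((1 - x : ℝ)) : ℂ) by push_cast; ring,
        show ((β:ℂ) - 1) = ((β - 1 : ℝ) : ℂ) by push_cast; ring,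
        Complex.ofReal_cpow hx1]
    show (x:ℂ) ^ ((α:ℂ) - 1) * ((1:ℂ) - x) ^ ((β:ℂ) - 1) = _
    rw [e1, e2]
    push_cast
    rw [show α - 1 = -β by linarith, show β - 1 = -α by linarith]
    ring
  rw [hioc, intervalIntegral.integral_ofReal] at h
  have := congrArg Complex.re h
  simpa [Complex.Gamma_ofReal] using this.symm

lemma beta_conv' (α β u t : ℝ) (hα0 : 0 < α) (hβ0 : 0 < β) (hsum : α + β = 1)
    (hut : u < t) :
    ∫ s in u..t, (t - s) ^ (-α) * (s - u) ^ (-β) = Real.Gamma α * Real.Gamma β := by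
  have hbeta := beta_real' α β hα0 hβ0 hsum
  set g : ℝ → ℝ := fun s => (t - s) ^ (-α) * (s - u) ^ (-β) with hg
  have h1 : (∫ y in (0:ℝ)..(t - u), g (y + u)) = ∫ s in u..t, g s := by
    simpa using intervalIntegral.integral_comp_add_right (a := (0:ℝ)) (b := t - u) g u
  have htu : 0 < t - u := by linarith
  have h2 : (t - u) • (∫ x in (0:ℝ)..1, g ((t - u) * x + u))
      = ∫ y in (0:ℝ)..(t - u), g (y + u) := by
    simpa using intervalIntegral.smul_integral_comp_mul_left (a := (0:ℝ)) (b := 1)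
      (fun y => g (y + u)) (t - u)
  have h3 : (∫ x in (0:ℝ)..1, g ((t - u) * x + u))
      = (t - u)⁻¹ * (Real.Gamma α * Real.Gamma β) := by
    have heq : (∫ x in (0:ℝ)..1, g ((t - u) * x + u))
        = ∫ x in (0:ℝ)..1, (t - u) ^ (-α) * (t - u) ^ (-β) * ((1 - x) ^ (-α) * x ^ (-β)) := by
      apply intervalIntegral.integral_congr
      intro x hx
      rw [uIcc_of_le (by norm_num)] at hx
      have hx0 : (0:ℝ) ≤ x := hx.1
      have hx1 : (0:ℝ) ≤ 1 - x := by linarith [hx.2]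
      have e1 : t - ((t - u) * x + u) = (t - u) * (1 - x) := by ring
      have e2 : (t - u) * x + u - u = (t - u) * x := by ring
      simp only [hg, e1, e2]
      rw [Real.mul_rpow htu.le hx1, Real.mul_rpow htu.le hx0]
      ring
    rw [heq, intervalIntegral.integral_const_mul, hbeta]
    have e3 : (t - u) ^ (-α) * (t - u) ^ (-β) = (t - u)⁻¹ := by
      rw [← Real.rpow_add htu, show -α + -β = -1 by linarith, Real.rpow_neg_one]
    rw [e3]
  rw [← h1, ← h2, h3]
  field_simp
  rw [smul_eq_mul]
  field_simp

lemma kern_intble' (β a s : ℝ) (hβ1 : β < 1) :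
    IntervalIntegrable (fun u => (s - u) ^ (-β)) volume a s := by
  have h := (intervalIntegrable_rpow' (a := s - a) (b := 0) (r := -β)
    (by linarith)).comp_sub_left s
  simpa using h

lemma kern_int' (β a s : ℝ) (hβ1 : β < 1) (has : a ≤ s) :
    ∫ u in a..s, (s - u) ^ (-β) = (s - a) ^ (1 - β) / (1 - β) := by
  rw [intervalIntegral.integral_comp_sub_left (fun x => x ^ (-β)) s, sub_self]
  rw [integral_rpow (Or.inl (by linarith))]
  rw [show -β + 1 = 1 - β by ring, Real.zero_rpow (by linarith)]
  ring

lemma kern_mul_intble' (β a b s : ℝ) (hβ1 : β < 1) {g : ℝ → ℝ}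
    (hg : ContinuousOn g (Set.Icc a b)) (has : a ≤ s) (hsb : s ≤ b) :
    IntervalIntegrable (fun u => (s - u) ^ (-β) * g u) volume a s :=
  (kern_intble' β a s hβ1).mul_continuousOn
    (hg.mono (by rw [uIcc_of_le has]; exact Icc_subset_Icc le_rfl hsb))

lemma aux_eq (α β a b t : ℝ) (f : ℝ → ℝ)
    (hα0 : 0 < α) (hα1 : α < 1) (hβ0 : 0 < β) (hβ1 : β < 1)
    (hsum : α + β = 1) (hab : a < b)
    (hf : ∀ x ∈ Set.Icc a b, HasDerivAt f (deriv f x) x)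
    (hf' : ContinuousOn (deriv f) (Set.Icc a b))
    (ht : t ∈ Set.Ioo a b) :
    seqCaputoAux α β a f t = f t - f a := by
  obtain ⟨hat, htb⟩ := ht
  have hΓα : Real.Gamma α ≠ 0 := (Real.Gamma_pos_of_pos hα0).ne'
  have hΓβ : Real.Gamma β ≠ 0 := (Real.Gamma_pos_of_pos hβ0).ne'
  obtain ⟨M, hM⟩ := (isCompact_Icc (a := a) (b := b)).exists_bound_of_continuousOn hf'
  have hM0 : 0 ≤ M := le_trans (norm_nonneg _) (hM a ⟨le_rfl, hab.le⟩)
  set μ := volume.restrict (Set.Ioo a t) with hμ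
  set F : ℝ → ℝ → ℝ := fun s u =>
    Set.indicator (Set.Ioo a s) (fun u => (t - s) ^ (-α) * ((s - u) ^ (-β) * deriv f u)) u
    with hF
  -- measurability
  have hFun : Function.uncurry F = Set.indicator {p : ℝ × ℝ | a < p.2 ∧ p.2 < p.1}
      (fun p => (t - p.1) ^ (-α) * ((p.1 - p.2) ^ (-β) * deriv f p.2)) := by
    funext p
    simp [Function.uncurry, hF, Set.indicator_apply, Set.mem_Ioo, Set.mem_setOf_eq]
  have hSmeas : MeasurableSet {p : ℝ × ℝ | a < p.2 ∧ p.2 < p.1} :=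
    (measurableSet_lt measurable_const measurable_snd).inter
      (measurableSet_lt measurable_snd measurable_fst)
  have hGmeas : Measurable (fun p : ℝ × ℝ =>
      (t - p.1) ^ (-α) * ((p.1 - p.2) ^ (-β) * deriv f p.2)) :=
    (((measurable_rpow_const' _).comp (measurable_const.sub measurable_fst)).mul
      (((measurable_rpow_const' _).comp (measurable_fst.sub measurable_snd)).mul
        ((measurable_deriv f).comp measurable_snd)))
  have hFmeas : AEStronglyMeasurable (Function.uncurry F) (μ.prod μ) := by
    rw [hFun]; exact ((hGmeas.indicator hSmeas)).aestronglyMeasurable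
  -- slice integrability
  have hslice : ∀ s, a < s → s ≤ t →
      IntegrableOn (fun u => (t - s) ^ (-α) * ((s - u) ^ (-β) * deriv f u))
        (Set.Ioo a s) volume := by
    intro s hs1 hs2
    have h1 : IntervalIntegrable (fun u => (s - u) ^ (-β) * deriv f u) volume a s :=
      kern_mul_intble' β a b s hβ1 hf' hs1.le (hs2.trans htb.le)
    exact ((h1.1.mono_set Set.Ioo_subset_Ioc_self).const_mul _)
  have hsliceμ : ∀ s ∈ Set.Ioo a t, Integrable (F s) μ := by
    intro s hs
    rw [hF]
    rw [integrable_indicator_iff measurableSet_Ioo]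
    rw [IntegrableOn, Measure.restrict_restrict measurableSet_Ioo,
      Set.inter_eq_left.mpr (Set.Ioo_subset_Ioo le_rfl hs.2.le)]
    exact hslice s hs.1 hs.2.le
  -- bound on norm-integral
  set C : ℝ := M * ((t - a) ^ (1 - β) / (1 - β)) with hC
  have hC0 : 0 ≤ C := by
    apply mul_nonneg hM0
    apply div_nonneg (Real.rpow_nonneg (by linarith) _) (by linarith)
  have hbound : ∀ s ∈ Set.Ioo a t, (∫ u, ‖F s u‖ ∂μ) ≤ (t - s) ^ (-α) * C := by
    intro s hs
    have hts : (0:ℝ) ≤ (t - s) ^ (-α) := Real.rpow_nonneg (by linarith [hs.2]) _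
    have hnorm : (∫ u, ‖F s u‖ ∂μ)
        = ∫ u in Set.Ioo a s, ‖(t - s) ^ (-α) * ((s - u) ^ (-β) * deriv f u)‖ := by
      rw [hF]
      simp only [norm_indicator_eq_indicator_norm]
      rw [MeasureTheory.integral_indicator measurableSet_Ioo,
        Measure.restrict_restrict measurableSet_Ioo,
        Set.inter_eq_left.mpr (Set.Ioo_subset_Ioo le_rfl hs.2.le)]
    rw [hnorm]
    have hmaj : ∀ u ∈ Set.Ioo a s, ‖(t - s) ^ (-α) * ((s - u) ^ (-β) * deriv f u)‖
        ≤ (t - s) ^ (-α) * ((s - u) ^ (-β) * M) := by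
      intro u hu
      have h1 : (0:ℝ) ≤ (s - u) ^ (-β) := Real.rpow_nonneg (by linarith [hu.2]) _
      rw [norm_mul, norm_mul, Real.norm_eq_abs, Real.norm_eq_abs,
        abs_of_nonneg hts, abs_of_nonneg h1]
      have h2 : ‖deriv f u‖ ≤ M := hM u ⟨hu.1.le, le_trans hu.2.le (hs.2.le.trans htb.le)⟩
      have := mul_le_mul_of_nonneg_left h2 h1
      exact mul_le_mul_of_nonneg_left this hts
    have hint2 : IntegrableOn (fun u => (t - s) ^ (-α) * ((s - u) ^ (-β) * M))
        (Set.Ioo a s) volume := by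
      have := ((kern_intble' β a s hβ1).mul_const M).1.mono_set
        (Set.Ioo_subset_Ioc_self (a := s) (b := a))
      exact this.const_mul _
    have hint1 : IntegrableOn (fun u => ‖(t - s) ^ (-α) * ((s - u) ^ (-β) * deriv f u)‖)
        (Set.Ioo a s) volume := (hslice s hs.1 hs.2.le).norm
    calc (∫ u in Set.Ioo a s, ‖(t - s) ^ (-α) * ((s - u) ^ (-β) * deriv f u)‖)
        ≤ ∫ u in Set.Ioo a s, (t - s) ^ (-α) * ((s - u) ^ (-β) * M) :=
          setIntegral_mono_on hint1 hint2 measurableSet_Ioo hmaj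
      _ = (t - s) ^ (-α) * ((∫ u in Set.Ioo a s, (s - u) ^ (-β)) * M) := by
          rw [MeasureTheory.integral_const_mul, MeasureTheory.integral_mul_const]
      _ = (t - s) ^ (-α) * ((s - a) ^ (1 - β) / (1 - β) * M) := by
          rw [← integral_Ioc_eq_integral_Ioo, ← intervalIntegral.integral_of_le hs.1.le,
            kern_int' β a s hβ1 hs.1.le]
      _ ≤ (t - s) ^ (-α) * C := by
          apply mul_le_mul_of_nonneg_left _ hts
          rw [hC, mul_comm M]
          apply mul_le_mul_of_nonneg_right _ hM0
          apply div_le_div_of_nonneg_right _ (by linarith)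
          exact Real.rpow_le_rpow (by linarith [hs.1]) (by linarith [hs.2]) (by linarith)
  -- integrability of the bound
  have hBint : Integrable (fun s => (t - s) ^ (-α) * C) μ :=
    ((kern_intble' α a t hα1).mul_const C).1.mono_set
      (Set.Ioo_subset_Ioc_self (a := t) (b := a))
  have hnormmeas : AEStronglyMeasurable (fun s => ∫ u, ‖F s u‖ ∂μ) μ :=
    hFmeas.norm.integral_prod_right'
  have hnormint : Integrable (fun s => ∫ u, ‖F s u‖ ∂μ) μ := by
    apply Integrable.mono' hBint hnormmeas
    rw [hμ, ae_restrict_iff' measurableSet_Ioo]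
    refine Filter.Eventually.of_forall fun s hs => ?_
    rw [Real.norm_eq_abs, abs_of_nonneg (integral_nonneg fun u => norm_nonneg _)]
    exact hbound s hs
  have hInt : Integrable (Function.uncurry F) (μ.prod μ) := by
    rw [integrable_prod_iff hFmeas]
    refine ⟨?_, hnormint⟩
    rw [hμ, ae_restrict_iff' measurableSet_Ioo]
    exact Filter.Eventually.of_forall fun s hs => hsliceμ s hs
  have hswap := MeasureTheory.integral_integral_swap hInt
  -- evaluate left side
  have hL : (∫ s, (∫ u, F s u ∂μ) ∂μ)
      = Real.Gamma α * ∫ s in a..t, (t - s) ^ (-α) * caputo β a f s := by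
    have h1 : Set.EqOn (fun s => ∫ u, F s u ∂μ)
        (fun s => Real.Gamma α * ((t - s) ^ (-α) * caputo β a f s)) (Set.Ioo a t) := by
      intro s hs
      show (∫ u, F s u ∂μ) = Real.Gamma α * ((t - s) ^ (-α) * caputo β a f s)
      rw [hF]
      rw [MeasureTheory.integral_indicator measurableSet_Ioo,
        Measure.restrict_restrict measurableSet_Ioo,
        Set.inter_eq_left.mpr (Set.Ioo_subset_Ioo le_rfl hs.2.le),
        MeasureTheory.integral_const_mul]
      have hcap : caputo β a f s
          = (1 / Real.Gamma α) * ∫ u in Set.Ioo a s, (s - u) ^ (-β) * deriv f u := by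
        show (1 / Real.Gamma (1 - β)) * (∫ u in a..s, (s - u) ^ (-β) * deriv f u) = _
        rw [show (1:ℝ) - β = α by linarith, intervalIntegral.integral_of_le hs.1.le,
          integral_Ioc_eq_integral_Ioo]
      rw [hcap]
      field_simp
    calc (∫ s, (∫ u, F s u ∂μ) ∂μ)
        = ∫ s in Set.Ioo a t, Real.Gamma α * ((t - s) ^ (-α) * caputo β a f s) := by
          rw [hμ]; exact setIntegral_congr_fun measurableSet_Ioo h1
      _ = Real.Gamma α * ∫ s in a..t, (t - s) ^ (-α) * caputo β a f s := by
          rw [MeasureTheory.integral_const_mul, intervalIntegral.integral_of_le hat.le,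
            integral_Ioc_eq_integral_Ioo]
  -- evaluate right side
  have hR : (∫ u, (∫ s, F s u ∂μ) ∂μ)
      = Real.Gamma α * Real.Gamma β * (f t - f a) := by
    have h1 : Set.EqOn (fun u => ∫ s, F s u ∂μ)
        (fun u => Real.Gamma α * Real.Gamma β * deriv f u) (Set.Ioo a t) := by
      intro u hu
      show (∫ s, F s u ∂μ) = Real.Gamma α * Real.Gamma β * deriv f u
      have hrepr : ∀ s, F s u = Set.indicator (Set.Ioi u)
          (fun s => (t - s) ^ (-α) * ((s - u) ^ (-β) * deriv f u)) s := by
        intro s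
        simp [hF, Set.indicator_apply, Set.mem_Ioo, Set.mem_Ioi, hu.1]
      simp only [hrepr]
      rw [MeasureTheory.integral_indicator measurableSet_Ioi,
        Measure.restrict_restrict measurableSet_Ioi]
      have hset : Set.Ioi u ∩ Set.Ioo a t = Set.Ioo u t := by
        ext x
        simp only [Set.mem_inter_iff, Set.mem_Ioi, Set.mem_Ioo]
        constructor
        · rintro ⟨h1, _, h3⟩; exact ⟨h1, h3⟩
        · rintro ⟨h1, h2⟩; exact ⟨h1, hu.1.trans h1, h2⟩
      rw [hset, ← integral_Ioc_eq_integral_Ioo, ← intervalIntegral.integral_of_le hu.2.le]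
      have hpull : (∫ s in u..t, (t - s) ^ (-α) * ((s - u) ^ (-β) * deriv f u))
          = (∫ s in u..t, (t - s) ^ (-α) * (s - u) ^ (-β)) * deriv f u := by
        rw [← intervalIntegral.integral_mul_const]
        apply intervalIntegral.integral_congr
        intro x _
        ring
      rw [hpull, beta_conv' α β u t hα0 hβ0 hsum hu.2]
    calc (∫ u, (∫ s, F s u ∂μ) ∂μ)
        = ∫ u in Set.Ioo a t, Real.Gamma α * Real.Gamma β * deriv f u := by
          rw [hμ]; exact setIntegral_congr_fun measurableSet_Ioo h1
      _ = Real.Gamma α * Real.Gamma β * (f t - f a) := by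
          rw [MeasureTheory.integral_const_mul]
          congr 1
          rw [← integral_Ioc_eq_integral_Ioo, ← intervalIntegral.integral_of_le hat.le]
          apply intervalIntegral.integral_eq_sub_of_hasDerivAt
          · intro x hx
            rw [uIcc_of_le hat.le] at hx
            exact hf x ⟨hx.1, hx.2.trans htb.le⟩
          · apply ContinuousOn.intervalIntegrable
            apply hf'.mono
            rw [uIcc_of_le hat.le]
            exact Icc_subset_Icc le_rfl htb.le
  rw [hL, hR] at hswap
  have hI : (∫ s in a..t, (t - s) ^ (-α) * caputo β a f s)
      = Real.Gamma β * (f t - f a) :=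
    mul_left_cancel₀ hΓα (by rw [← mul_assoc]; exact hswap)
  rw [show seqCaputoAux α β a f t = (1 / Real.Gamma (1 - α)) * ∫ s in a..t, (t - s) ^ (-α) * caputo β a f s from rfl, show (1:ℝ) - α = β by linarith, hI]
  field_simp

end AuxLemmas

/-- the sequential Caputo derivative vanishes at an interior
minimum point when `α + β = 1`. -/
theorem seqCaputo_min_eq_zero_of_eq_one
    (α β a b : ℝ) (f : ℝ → ℝ) (xs : ℝ)
    (hα0 : 0 < α) (hα1 : α < 1) (hβ0 : 0 < β) (hβ1 : β < 1)
    (hsum : α + β = 1) (hab : a < b)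
    (hf : ∀ x ∈ Set.Icc a b, HasDerivAt f (deriv f x) x)
    (hf' : ContinuousOn (deriv f) (Set.Icc a b))
    (hex : ∀ x ∈ Set.Ioo a b,
      HasDerivAt (seqCaputoAux α β a f) (seqCaputo α β a f x) x)
    (hcont : ∃ g : ℝ → ℝ, ContinuousOn g (Set.Icc a b) ∧
      ∀ x ∈ Set.Ioo a b, g x = seqCaputo α β a f x)
    (hxs : xs ∈ Set.Ioo a b)
    (hmin : ∀ x ∈ Set.Icc a b, f xs ≤ f x) :
    seqCaputo α β a f xs = 0 := by
  obtain ⟨ha, hb⟩ := hxs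
  have hmem : Set.Ioo a b ∈ nhds xs := Ioo_mem_nhds ha hb
  have hev : seqCaputoAux α β a f =ᶠ[nhds xs] fun x => f x - f a :=
    Filter.eventuallyEq_of_mem hmem
      (fun x hx => aux_eq α β a b x f hα0 hα1 hβ0 hβ1 hsum hab hf hf' hx)
  have h1 : seqCaputo α β a f xs = deriv (fun x => f x - f a) xs := hev.deriv_eq
  rw [h1, deriv_sub_const]
  have hloc : IsLocalMin f xs :=
    Filter.eventually_of_mem hmem fun x hx => hmin x (Set.Ioo_subset_Icc_self hx)
  exact hloc.deriv_eq_zero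
end
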